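/- There exists a constant c > 0 such that for every x > 0, | r'(x) + (2π)^{−1/2} x^{−1/2} | ≤ c; that is, the derivative of r satisfies r'(x) = −(1/√(2π)) x^{−1/2} + O(1) uniformly on (0, ∞). -/

import Mathlib

open MeasureTheory Real Set

/-- `L t = ∫_0^t (log s)/(1+s²) ds`. -/
noncomputable def Lfun (t : ℝ) : ℝ := ∫ s in (0 : ℝ)..t, Real.log s / (1 + s ^ 2)

/-- The derivative of `r`:
`r'(x) = -(√2/(2π)) ∫_0^∞ t² (1+t²)^{-5/4} exp(L(t)/π) e^{-tx} dt`. -/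
noncomputable def rDeriv (x : ℝ) : ℝ :=
  -(Real.sqrt 2 / (2 * Real.pi)) * ∫ t in Set.Ioi (0 : ℝ),
    t ^ 2 * (1 + t ^ 2) ^ (-(5 / 4 : ℝ)) * Real.exp (Lfun t / Real.pi) * Real.exp (-t * x)

noncomputable def hfun (s : ℝ) : ℝ := Real.log s / (1 + s ^ 2)
noncomputable def Dfun (s : ℝ) : ℝ := if s ≤ 1 then 4 * s ^ (-(1/4) : ℝ) else 4 * s ^ (-(7/4) : ℝ)

lemma hfun_meas : Measurable hfun :=
  Real.measurable_log.div ((measurable_const.add ((measurable_id.pow_const 2))))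

lemma log_le_four_rpow {s : ℝ} (hs : 0 < s) : Real.log s ≤ 4 * s ^ ((1/4) : ℝ) := by
  have h1 : Real.log (s ^ ((1/4):ℝ)) = (1/4) * Real.log s := Real.log_rpow hs _
  have h2 : Real.log (s ^ ((1/4):ℝ)) ≤ s ^ ((1/4):ℝ) - 1 :=
    Real.log_le_sub_one_of_pos (Real.rpow_pos_of_pos hs _)
  have h3 : (0:ℝ) ≤ s ^ ((1/4):ℝ) := (Real.rpow_pos_of_pos hs _).le
  nlinarith
lemma hfun_bound {s : ℝ} (hs : 0 < s) : |hfun s| ≤ Dfun s := by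
  have hden : (1:ℝ) ≤ 1 + s ^ 2 := by nlinarith
  have habs : |hfun s| = |Real.log s| / (1 + s ^ 2) := by
    rw [hfun, abs_div, abs_of_pos (by nlinarith : (0:ℝ) < 1 + s^2)]
  by_cases h1 : s ≤ 1
  · rw [Dfun, if_pos h1, habs]
    have hlog : |Real.log s| = -Real.log s := abs_of_nonpos (Real.log_nonpos hs.le h1)
    have : Real.log s⁻¹ ≤ 4 * (s⁻¹) ^ ((1/4):ℝ) := log_le_four_rpow (by positivity)
    rw [Real.log_inv, ← Real.rpow_neg_one s, ← Real.rpow_mul hs.le] at this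
    have h4 : -Real.log s ≤ 4 * s ^ (-(1/4):ℝ) := by
      convert this using 3; norm_num
    calc |Real.log s| / (1 + s^2) ≤ |Real.log s| / 1 :=
          div_le_div_of_nonneg_left (abs_nonneg _) one_pos hden
      _ = -Real.log s := by rw [div_one, hlog]
      _ ≤ 4 * s ^ (-(1/4):ℝ) := h4
  · push_neg at h1
    rw [Dfun, if_neg (not_le.2 h1), habs]
    have hlogpos : 0 ≤ Real.log s := Real.log_nonneg h1.le
    rw [abs_of_nonneg hlogpos]
    have hs2 : s ^ 2 ≤ 1 + s ^ 2 := by nlinarith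
    calc Real.log s / (1 + s^2) ≤ (4 * s ^ ((1/4):ℝ)) / (s ^ 2) := by
          apply div_le_div₀ (by positivity) (log_le_four_rpow hs) (by positivity) hs2
      _ = 4 * s ^ (-(7/4):ℝ) := by
          rw [mul_div_assoc, ← Real.rpow_natCast s 2, ← Real.rpow_sub hs]
          norm_num

lemma Dfun_nonneg {s : ℝ} (hs : 0 < s) : 0 ≤ Dfun s := by
  rw [Dfun]; split <;> positivity

lemma Dfun_int : IntegrableOn Dfun (Ioi (0:ℝ)) := by
  have h1 : IntegrableOn Dfun (Ioc (0:ℝ) 1) := by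
    have : IntegrableOn (fun s : ℝ => 4 * s ^ (-(1/4):ℝ)) (Ioc (0:ℝ) 1) := by
      have := (intervalIntegral.intervalIntegrable_rpow' (a := 0) (b := 1)
        (by norm_num : (-1:ℝ) < -(1/4)))
      rw [intervalIntegrable_iff_integrableOn_Ioc_of_le zero_le_one] at this
      exact this.const_mul 4
    apply this.congr_fun ?_ measurableSet_Ioc
    intro s hs; rw [Dfun, if_pos hs.2]
  have h2 : IntegrableOn Dfun (Ioi (1:ℝ)) := by
    have : IntegrableOn (fun s : ℝ => 4 * s ^ (-(7/4):ℝ)) (Ioi (1:ℝ)) :=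
      (integrableOn_Ioi_rpow_of_lt (by norm_num) one_pos).const_mul 4
    apply this.congr_fun ?_ measurableSet_Ioi
    intro s hs; rw [Dfun, if_neg (not_le.2 hs)]
  have := h1.union h2
  rwa [Set.Ioc_union_Ioi_eq_Ioi zero_le_one] at this

noncomputable def Mconst : ℝ := ∫ s in Ioi (0:ℝ), Dfun s

lemma Mconst_nonneg : 0 ≤ Mconst :=
  setIntegral_nonneg measurableSet_Ioi fun s hs => Dfun_nonneg hs

lemma hfun_int : IntegrableOn hfun (Ioi (0:ℝ)) := by
  apply Dfun_int.mono' (hfun_meas.aestronglyMeasurable)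
  filter_upwards [ae_restrict_mem measurableSet_Ioi] with s hs
  simpa using hfun_bound hs


lemma Lfun_eq {t : ℝ} (ht : 0 < t) : Lfun t = ∫ s in Ioc (0:ℝ) t, hfun s := by
  rw [Lfun, intervalIntegral.integral_of_le ht.le]; rfl

lemma Lfun_abs_le {t : ℝ} (ht : 0 < t) : |Lfun t| ≤ Mconst := by
  rw [Lfun_eq ht]
  have h1 : |∫ s in Ioc (0:ℝ) t, hfun s| ≤ ∫ s in Ioc (0:ℝ) t, |hfun s| := by
    simpa using norm_integral_le_integral_norm (μ := volume.restrict (Ioc (0:ℝ) t)) hfun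
  have hint : IntegrableOn hfun (Ioc (0:ℝ) t) := hfun_int.mono_set Ioc_subset_Ioi_self
  have h2 : ∫ s in Ioc (0:ℝ) t, |hfun s| ≤ ∫ s in Ioc (0:ℝ) t, Dfun s := by
    apply setIntegral_mono_on hint.abs (Dfun_int.mono_set Ioc_subset_Ioi_self)
      measurableSet_Ioc
    intro s hs; exact hfun_bound hs.1
  have h3 : ∫ s in Ioc (0:ℝ) t, Dfun s ≤ Mconst := by
    apply setIntegral_mono_set Dfun_int
    · filter_upwards [ae_restrict_mem measurableSet_Ioi] with s hs using Dfun_nonneg hs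
    · exact HasSubset.Subset.eventuallyLE Ioc_subset_Ioi_self
  linarith

lemma integral_hfun_zero : ∫ s in Ioi (0:ℝ), hfun s = 0 := by
  have := MeasureTheory.integral_comp_rpow_Ioi hfun (p := -1) (by norm_num)
  have heq : ∀ x ∈ Ioi (0:ℝ), (|(-1:ℝ)| * x ^ ((-1:ℝ) - 1)) • hfun (x ^ (-1:ℝ)) = -hfun x := by
    intro x hx
    have hx0 : (0:ℝ) < x := hx
    have h1 : x ^ (-1:ℝ) = x⁻¹ := Real.rpow_neg_one x
    have h2 : x ^ ((-1:ℝ) - 1) = (x ^ 2)⁻¹ := by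
      rw [show ((-1:ℝ) - 1) = -(2:ℕ) by norm_num, Real.rpow_neg hx0.le,
        Real.rpow_natCast]
    rw [h1, h2, hfun, hfun, Real.log_inv, smul_eq_mul]
    have hx2 : (0:ℝ) < 1 + x ^ 2 := by nlinarith
    field_simp
    ring
  rw [setIntegral_congr_fun measurableSet_Ioi heq, integral_neg] at this
  linarith

lemma Lfun_tail {t : ℝ} (ht : 1 ≤ t) : |Lfun t| ≤ 6 * t ^ (-(3/4):ℝ) := by
  have ht0 : (0:ℝ) < t := lt_of_lt_of_le one_pos ht
  have hsplit : (∫ s in Ioi (0:ℝ), hfun s)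
      = (∫ s in Ioc (0:ℝ) t, hfun s) + ∫ s in Ioi t, hfun s := by
    rw [← MeasureTheory.setIntegral_union (Set.Ioc_disjoint_Ioi le_rfl) measurableSet_Ioi
      (hfun_int.mono_set Ioc_subset_Ioi_self) (hfun_int.mono_set (Ioi_subset_Ioi ht0.le)),
      Set.Ioc_union_Ioi_eq_Ioi ht0.le]
  have hLt : Lfun t = -∫ s in Ioi t, hfun s := by
    rw [Lfun_eq ht0]; rw [integral_hfun_zero] at hsplit; linarith
  rw [hLt, abs_neg]
  have htint : IntegrableOn hfun (Ioi t) := hfun_int.mono_set (Ioi_subset_Ioi ht0.le)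
  have h1 : |∫ s in Ioi t, hfun s| ≤ ∫ s in Ioi t, |hfun s| := by
    simpa using norm_integral_le_integral_norm (μ := volume.restrict (Ioi t)) hfun
  have h2 : ∫ s in Ioi t, |hfun s| ≤ ∫ s in Ioi t, 4 * s ^ (-(7/4):ℝ) := by
    apply setIntegral_mono_on htint.abs
      (((integrableOn_Ioi_rpow_of_lt (by norm_num) ht0).const_mul 4))
      measurableSet_Ioi
    intro s hs
    have hs1 : 1 < s := lt_of_le_of_lt ht hs
    have := hfun_bound (lt_trans one_pos hs1)
    rwa [Dfun, if_neg (not_le.2 hs1)] at this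
  have h3 : ∫ s in Ioi t, 4 * s ^ (-(7/4):ℝ) = 4 * (-t ^ (-(7/4) + 1:ℝ) / (-(7/4) + 1)) := by
    rw [MeasureTheory.integral_const_mul, integral_Ioi_rpow_of_lt (by norm_num) ht0]
  have h4 : 4 * (-t ^ (-(7/4) + 1:ℝ) / (-(7/4) + 1)) ≤ 6 * t ^ (-(3/4):ℝ) := by
    have : (-(7/4) + 1 : ℝ) = -(3/4) := by norm_num
    rw [this]
    have := Real.rpow_nonneg ht0.le (-(3/4):ℝ)
    nlinarith
  linarith

lemma Lfun_contAt {t : ℝ} (ht : 0 < t) : ContinuousAt Lfun t := by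
  have hii : IntervalIntegrable hfun volume 0 t := by
    rw [intervalIntegrable_iff_integrableOn_Ioc_of_le ht.le]
    exact hfun_int.mono_set Ioc_subset_Ioi_self
  have hca : ContinuousAt hfun t := by
    apply ContinuousAt.div (Real.continuousAt_log ht.ne') (by fun_prop)
    nlinarith
  have := intervalIntegral.integral_hasDerivAt_right hii
    (hfun_meas.stronglyMeasurable.stronglyMeasurableAtFilter) hca
  exact this.continuousAt

lemma Lfun_contOn : ContinuousOn Lfun (Ioi (0:ℝ)) :=
  fun t ht => (Lfun_contAt ht).continuousWithinAt

lemma abs_exp_sub_one_le' (u : ℝ) : |Real.exp u - 1| ≤ Real.exp |u| * |u| := by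
  rcases le_or_gt 0 u with h | h
  · rw [abs_of_nonneg h, abs_of_nonneg (by linarith [Real.one_le_exp h] : (0:ℝ) ≤ Real.exp u - 1)]
    have h1 : 1 - u ≤ Real.exp (-u) := by linarith [Real.add_one_le_exp (-u)]
    have h2 : Real.exp (-u) * Real.exp u = 1 := by
      rw [← Real.exp_add]; simp
    nlinarith [Real.exp_pos u]
  · rw [abs_of_neg h]
    have h1 : Real.exp u - 1 ≤ 0 := by
      have := Real.exp_le_one_iff.mpr h.le; linarith
    rw [abs_of_nonpos h1]
    have h2 : u + 1 ≤ Real.exp u := Real.add_one_le_exp u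
    have h3 : 1 ≤ Real.exp (-u) := Real.one_le_exp (by linarith)
    nlinarith

noncomputable def Ffun (t : ℝ) : ℝ :=
  t ^ 2 * (1 + t ^ 2) ^ (-(5 / 4 : ℝ)) * Real.exp (Lfun t / Real.pi)
noncomputable def Kconst : ℝ := Real.exp Mconst
noncomputable def Cconst : ℝ := 7 * Kconst + 7
noncomputable def Bfun (t : ℝ) : ℝ :=
  Cconst * (if t ≤ 1 then t ^ (-(1/2) : ℝ) else t ^ (-(5/4) : ℝ))

lemma one_le_Kconst : 1 ≤ Kconst := Real.one_le_exp Mconst_nonneg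

lemma phi_eq {t : ℝ} (ht : 0 < t) :
    t ^ 2 * (1 + t ^ 2) ^ (-(5 / 4 : ℝ))
      = t ^ (-(1/2) : ℝ) * ((t ^ 2 / (1 + t ^ 2)) ^ ((5/4) : ℝ)) := by
  have hpos : (0:ℝ) < 1 + t ^ 2 := by positivity
  have h2 : (t ^ 2 : ℝ) ^ ((5/4):ℝ) = t ^ ((5/2):ℝ) := by
    rw [← Real.rpow_natCast t 2, ← Real.rpow_mul ht.le]; norm_num
  have h3 : t ^ (-(1/2):ℝ) * t ^ ((5/2):ℝ) = t ^ 2 := by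
    rw [← Real.rpow_add ht, ← Real.rpow_natCast t 2]; norm_num
  rw [Real.div_rpow (sq_nonneg t) hpos.le, h2, Real.rpow_neg hpos.le, ← h3]
  ring

lemma psi_le_one {t : ℝ} (ht : 0 < t) : (t ^ 2 / (1 + t ^ 2)) ^ ((5/4) : ℝ) ≤ 1 := by
  apply Real.rpow_le_one (by positivity)
  · rw [div_le_one (by positivity)]; nlinarith
  · norm_num

lemma psi_lb {t : ℝ} (ht : 0 < t) :
    1 - (5/4) / (1 + t ^ 2) ≤ (t ^ 2 / (1 + t ^ 2)) ^ ((5/4) : ℝ) := by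
  have hpos : (0:ℝ) < 1 + t ^ 2 := by positivity
  have hs : (-1:ℝ) ≤ -(1 / (1 + t ^ 2)) := by
    rw [neg_le_neg_iff, div_le_one hpos]; nlinarith
  have key := one_add_mul_self_le_rpow_one_add hs (by norm_num : (1:ℝ) ≤ 5/4)
  have he : (1 + -(1 / (1 + t ^ 2)) : ℝ) = t ^ 2 / (1 + t ^ 2) := by field_simp; ring
  rw [he] at key
  calc 1 - (5/4) / (1 + t ^ 2) = 1 + (5/4) * -(1 / (1 + t ^ 2)) := by ring
    _ ≤ _ := key

lemma exp_L_le {t : ℝ} (ht : 0 < t) : Real.exp (Lfun t / Real.pi) ≤ Kconst := by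
  apply Real.exp_le_exp.2
  rw [div_le_iff₀ Real.pi_pos]
  nlinarith [le_abs_self (Lfun t), Lfun_abs_le ht, Mconst_nonneg, Real.pi_gt_three]

lemma phi_nonneg {t : ℝ} (ht : 0 < t) : 0 ≤ t ^ 2 * (1 + t ^ 2) ^ (-(5 / 4 : ℝ)) := by
  positivity

lemma phi_le {t : ℝ} (ht : 0 < t) :
    t ^ 2 * (1 + t ^ 2) ^ (-(5 / 4 : ℝ)) ≤ t ^ (-(1/2) : ℝ) := by
  rw [phi_eq ht]
  calc t ^ (-(1/2):ℝ) * ((t ^ 2 / (1 + t ^ 2)) ^ ((5/4) : ℝ))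
      ≤ t ^ (-(1/2):ℝ) * 1 :=
        mul_le_mul_of_nonneg_left (psi_le_one ht) (Real.rpow_nonneg ht.le _)
    _ = t ^ (-(1/2):ℝ) := mul_one _

lemma Ffun_abs_le {t : ℝ} (ht : 0 < t) : |Ffun t| ≤ Kconst * t ^ (-(1/2):ℝ) := by
  rw [Ffun, abs_mul, abs_of_nonneg (phi_nonneg ht), abs_of_nonneg (Real.exp_pos _).le]
  calc t ^ 2 * (1 + t ^ 2) ^ (-(5 / 4 : ℝ)) * Real.exp (Lfun t / Real.pi)
      ≤ t ^ (-(1/2):ℝ) * Kconst :=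
        mul_le_mul (phi_le ht) (exp_L_le ht) (Real.exp_pos _).le (Real.rpow_nonneg ht.le _)
    _ = Kconst * t ^ (-(1/2):ℝ) := mul_comm _ _

lemma F_sub_bound {t : ℝ} (ht : 0 < t) : |Ffun t - t ^ (-(1/2):ℝ)| ≤ Bfun t := by
  have hu : (0:ℝ) < t ^ (-(1/2):ℝ) := Real.rpow_pos_of_pos ht _
  by_cases h1 : t ≤ 1
  · rw [Bfun, if_pos h1]
    calc |Ffun t - t ^ (-(1/2):ℝ)| ≤ |Ffun t| + |t ^ (-(1/2):ℝ)| := abs_sub _ _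
      _ = |Ffun t| + t ^ (-(1/2):ℝ) := by rw [abs_of_pos hu]
      _ ≤ Kconst * t ^ (-(1/2):ℝ) + t ^ (-(1/2):ℝ) := by linarith [Ffun_abs_le ht]
      _ ≤ Cconst * t ^ (-(1/2):ℝ) := by
          rw [Cconst]; nlinarith [one_le_Kconst, hu]
  · push_neg at h1
    rw [Bfun, if_neg (not_le.2 h1)]
    set u := t ^ (-(1/2):ℝ) with hu_def
    set ψ := (t ^ 2 / (1 + t ^ 2)) ^ ((5/4) : ℝ) with hψ_def
    set E := Real.exp (Lfun t / Real.pi) with hE_def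
    have hψ0 : 0 ≤ ψ := Real.rpow_nonneg (by positivity) _
    have hψ1 : ψ ≤ 1 := psi_le_one ht
    have hE0 : 0 < E := Real.exp_pos _
    have hsplit : Ffun t - u = u * ψ * (E - 1) + u * (ψ - 1) := by
      rw [Ffun, phi_eq ht]; ring
    have htq : (0:ℝ) < t ^ (-(3/4):ℝ) := Real.rpow_pos_of_pos ht _
    -- bound |E - 1|
    have hLπ : |Lfun t / Real.pi| ≤ 6 * t ^ (-(3/4):ℝ) := by
      rw [abs_div, abs_of_pos Real.pi_pos]
      calc |Lfun t| / Real.pi ≤ |Lfun t| / 1 := by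
            apply div_le_div_of_nonneg_left (abs_nonneg _) one_pos
            linarith [Real.pi_gt_three]
        _ = |Lfun t| := div_one _
        _ ≤ 6 * t ^ (-(3/4):ℝ) := Lfun_tail h1.le
    have hexpabs : Real.exp |Lfun t / Real.pi| ≤ Kconst := by
      apply Real.exp_le_exp.2
      rw [abs_div, abs_of_pos Real.pi_pos, div_le_iff₀ Real.pi_pos]
      nlinarith [Lfun_abs_le ht, Mconst_nonneg, Real.pi_gt_three]
    have hE1 : |E - 1| ≤ Kconst * (6 * t ^ (-(3/4):ℝ)) := by
      calc |E - 1| ≤ Real.exp |Lfun t / Real.pi| * |Lfun t / Real.pi| :=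
            abs_exp_sub_one_le' _
        _ ≤ Kconst * (6 * t ^ (-(3/4):ℝ)) := by
            apply mul_le_mul hexpabs hLπ (abs_nonneg _)
            linarith [one_le_Kconst]
    -- bound 1 - ψ
    have hψ2 : 1 - ψ ≤ 2 * t ^ (-(3/4):ℝ) := by
      have h3 := psi_lb ht
      have hpos : (0:ℝ) < 1 + t ^ 2 := by positivity
      have hc : (5/4:ℝ) / (1 + t ^ 2) ≤ 2 * t ^ (-(3/4):ℝ) := by
        have ha : t ^ ((3/4):ℝ) ≤ 1 + t ^ 2 := by
          have h5 := Real.rpow_le_rpow_of_exponent_le h1.le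
            (by norm_num : (3/4:ℝ) ≤ ((2:ℕ):ℝ))
          rw [Real.rpow_natCast t 2] at h5
          linarith
        have hq : (0:ℝ) < t ^ ((3/4):ℝ) := Real.rpow_pos_of_pos ht _
        have hb : (5/4:ℝ) / (1 + t ^ 2) ≤ (5/4) / t ^ ((3/4):ℝ) :=
          div_le_div_of_nonneg_left (by norm_num) hq ha
        have h6 : (5/4:ℝ) / t ^ ((3/4):ℝ) = (5/4) * t ^ (-(3/4):ℝ) := by
          rw [Real.rpow_neg ht.le, div_eq_mul_inv]
        rw [h6] at hb
        linarith
      linarith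
    have huq : u * t ^ (-(3/4):ℝ) = t ^ (-(5/4):ℝ) := by
      rw [hu_def, ← Real.rpow_add ht]; norm_num
    calc |Ffun t - u| ≤ u * ψ * |E - 1| + u * (1 - ψ) := by
          rw [hsplit]
          refine (abs_add_le _ _).trans ?_
          rw [abs_mul, abs_mul, abs_mul]
          rw [abs_of_pos hu, abs_of_nonneg hψ0, abs_sub_comm ψ 1,
            abs_of_nonneg (by linarith : (0:ℝ) ≤ 1 - ψ)]
      _ ≤ u * 1 * (Kconst * (6 * t ^ (-(3/4):ℝ))) + u * (2 * t ^ (-(3/4):ℝ)) := by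
          apply add_le_add
          · apply mul_le_mul (by nlinarith) hE1 (abs_nonneg _) (by nlinarith)
          · exact mul_le_mul_of_nonneg_left hψ2 hu.le
      _ = (6 * Kconst + 2) * (u * t ^ (-(3/4):ℝ)) := by ring
      _ ≤ Cconst * t ^ (-(5/4):ℝ) := by
          rw [huq, Cconst]
          have : (0:ℝ) < t ^ (-(5/4):ℝ) := Real.rpow_pos_of_pos ht _
          nlinarith [one_le_Kconst]

lemma Cconst_pos : 0 < Cconst := by rw [Cconst]; nlinarith [one_le_Kconst]

lemma Bfun_nonneg {t : ℝ} (ht : 0 < t) : 0 ≤ Bfun t := by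
  rw [Bfun]
  have := Cconst_pos
  split <;> positivity

lemma Bfun_int : IntegrableOn Bfun (Ioi (0:ℝ)) := by
  have h1 : IntegrableOn Bfun (Ioc (0:ℝ) 1) := by
    have : IntegrableOn (fun s : ℝ => Cconst * s ^ (-(1/2):ℝ)) (Ioc (0:ℝ) 1) := by
      have := (intervalIntegral.intervalIntegrable_rpow' (a := 0) (b := 1)
        (by norm_num : (-1:ℝ) < -(1/2)))
      rw [intervalIntegrable_iff_integrableOn_Ioc_of_le zero_le_one] at this
      exact this.const_mul _
    apply this.congr_fun ?_ measurableSet_Ioc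
    intro s hs; rw [Bfun, if_pos hs.2]
  have h2 : IntegrableOn Bfun (Ioi (1:ℝ)) := by
    have : IntegrableOn (fun s : ℝ => Cconst * s ^ (-(5/4):ℝ)) (Ioi (1:ℝ)) :=
      (integrableOn_Ioi_rpow_of_lt (by norm_num) one_pos).const_mul _
    apply this.congr_fun ?_ measurableSet_Ioi
    intro s hs; rw [Bfun, if_neg (not_le.2 hs)]
  have := h1.union h2
  rwa [Set.Ioc_union_Ioi_eq_Ioi zero_le_one] at this

lemma u_int {x : ℝ} (hx : 0 < x) :
    IntegrableOn (fun t : ℝ => t ^ (-(1/2):ℝ) * Real.exp (-t*x)) (Ioi (0:ℝ)) := by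
  have hmeas : AEStronglyMeasurable (fun t : ℝ => t ^ (-(1/2):ℝ) * Real.exp (-t*x)) volume := by
    apply AEStronglyMeasurable.mul
    · exact (measurable_id.pow_const _).aestronglyMeasurable
    · exact (Real.continuous_exp.comp (by fun_prop)).measurable.aestronglyMeasurable
  have h1 : IntegrableOn (fun t : ℝ => t ^ (-(1/2):ℝ) * Real.exp (-t*x)) (Ioc (0:ℝ) 1) := by
    have hb : IntegrableOn (fun s : ℝ => s ^ (-(1/2):ℝ)) (Ioc (0:ℝ) 1) := by
      have := (intervalIntegral.intervalIntegrable_rpow' (a := 0) (b := 1)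
        (by norm_num : (-1:ℝ) < -(1/2)))
      rwa [intervalIntegrable_iff_integrableOn_Ioc_of_le zero_le_one] at this
    apply hb.mono' hmeas.restrict
    filter_upwards [ae_restrict_mem measurableSet_Ioc] with t ht
    have ht0 : 0 < t := ht.1
    have he : Real.exp (-t*x) ≤ 1 := Real.exp_le_one_iff.2 (by nlinarith)
    rw [Real.norm_eq_abs, abs_mul, abs_of_nonneg (Real.rpow_nonneg ht0.le _),
      abs_of_pos (Real.exp_pos _)]
    nlinarith [Real.rpow_nonneg ht0.le (-(1/2):ℝ), Real.exp_pos (-t*x)]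
  have h2 : IntegrableOn (fun t : ℝ => t ^ (-(1/2):ℝ) * Real.exp (-t*x)) (Ioi (1:ℝ)) := by
    have hb : IntegrableOn (fun t : ℝ => Real.exp (-x*t)) (Ioi (1:ℝ)) :=
      exp_neg_integrableOn_Ioi 1 hx
    apply hb.mono' hmeas.restrict
    filter_upwards [ae_restrict_mem measurableSet_Ioi] with t ht
    have ht1 : (1:ℝ) ≤ t := le_of_lt ht
    have hr : t ^ (-(1/2):ℝ) ≤ 1 :=
      Real.rpow_le_one_of_one_le_of_nonpos ht1 (by norm_num)
    rw [Real.norm_eq_abs, abs_mul, abs_of_nonneg (Real.rpow_nonneg (by linarith) _),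
      abs_of_pos (Real.exp_pos _), show -t*x = -x*t by ring]
    nlinarith [Real.exp_pos (-x*t), Real.rpow_nonneg (show (0:ℝ) ≤ t by linarith) (-(1/2):ℝ)]
  have := h1.union h2
  rwa [Set.Ioc_union_Ioi_eq_Ioi zero_le_one] at this

lemma u_val {x : ℝ} (hx : 0 < x) :
    ∫ t in Ioi (0:ℝ), t ^ (-(1/2):ℝ) * Real.exp (-t*x)
      = Real.sqrt Real.pi * x ^ (-(1/2):ℝ) := by
  have h := integral_rpow_mul_exp_neg_mul_Ioi (show (0:ℝ) < 1/2 by norm_num) hx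
  calc ∫ t in Ioi (0:ℝ), t ^ (-(1/2):ℝ) * Real.exp (-t*x)
      = ∫ t in Ioi (0:ℝ), t ^ ((1/2:ℝ) - 1) * Real.exp (-(x*t)) := by
        apply setIntegral_congr_fun measurableSet_Ioi
        intro t ht
        simp only [show ((1/2:ℝ) - 1) = -(1/2) by norm_num, show -t*x = -(x*t) by ring]
    _ = (1/x) ^ ((1/2):ℝ) * Real.Gamma (1/2) := h
    _ = Real.sqrt Real.pi * x ^ (-(1/2):ℝ) := by
        rw [Real.Gamma_one_half_eq, one_div, ← Real.rpow_neg_one x, ← Real.rpow_mul hx.le]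
        norm_num [mul_comm]

lemma const_id : Real.sqrt 2 / (2 * Real.pi) * Real.sqrt Real.pi
    = (2 * Real.pi) ^ (-(1/2):ℝ) := by
  have hπ := Real.pi_pos
  have h2π : (0:ℝ) < 2 * Real.pi := by positivity
  rw [Real.rpow_neg h2π.le, ← Real.sqrt_eq_rpow, Real.sqrt_mul (by norm_num : (0:ℝ) ≤ 2)]
  have hs2 : Real.sqrt 2 * Real.sqrt 2 = 2 := Real.mul_self_sqrt (by norm_num)
  have hsπ : Real.sqrt Real.pi * Real.sqrt Real.pi = Real.pi := Real.mul_self_sqrt hπ.le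
  have h2 : (0:ℝ) < Real.sqrt 2 := by positivity
  have h3 : (0:ℝ) < Real.sqrt Real.pi := Real.sqrt_pos.2 hπ
  rw [div_mul_eq_mul_div, div_eq_iff (ne_of_gt h2π), eq_comm,
    inv_mul_eq_div, div_eq_iff (by positivity : Real.sqrt 2 * Real.sqrt Real.pi ≠ 0)]
  nlinarith


/-- `r'(x) = -(2π)^{-1/2} x^{-1/2} + O(1)` uniformly on `(0,∞)`. -/
theorem stmt16 :
    ∃ c : ℝ, 0 < c ∧ ∀ x : ℝ, 0 < x →
      |rDeriv x + (2 * Real.pi) ^ (-(1 / 2 : ℝ)) * x ^ (-(1 / 2 : ℝ))| ≤ c := by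
  have hBnn : 0 ≤ ∫ t in Ioi (0:ℝ), Bfun t :=
    setIntegral_nonneg measurableSet_Ioi fun t ht => Bfun_nonneg ht
  have hcoef : (0:ℝ) < Real.sqrt 2 / (2 * Real.pi) := by positivity
  refine ⟨Real.sqrt 2 / (2 * Real.pi) * (∫ t in Ioi (0:ℝ), Bfun t) + 1, by nlinarith, ?_⟩
  intro x hx
  set g : ℝ → ℝ := fun t => (Ffun t - t ^ (-(1/2):ℝ)) * Real.exp (-t*x) with hg_def
  have hgmeas : AEStronglyMeasurable g (volume.restrict (Ioi (0:ℝ))) := by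
    apply ContinuousOn.aestronglyMeasurable ?_ measurableSet_Ioi
    apply ContinuousOn.mul ?_ (Real.continuous_exp.comp (by fun_prop)).continuousOn
    apply ContinuousOn.sub
    · apply ContinuousOn.mul ?_ (Real.continuous_exp.comp_continuousOn (Lfun_contOn.div_const _))
      apply ContinuousOn.mul (continuous_pow 2).continuousOn
      apply ContinuousOn.rpow_const (by fun_prop : Continuous fun t : ℝ => 1 + t^2).continuousOn
      intro t ht
      left; positivity
    · intro t ht
      exact (Real.continuousAt_rpow_const t _ (Or.inl (ne_of_gt ht))).continuousWithinAt
  have hgbound : ∀ t ∈ Ioi (0:ℝ), ‖g t‖ ≤ Bfun t := by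
    intro t ht
    have ht0 : (0:ℝ) < t := ht
    have he : Real.exp (-t*x) ≤ 1 := Real.exp_le_one_iff.2 (by nlinarith)
    rw [hg_def, Real.norm_eq_abs, abs_mul, abs_of_pos (Real.exp_pos _)]
    calc |Ffun t - t ^ (-(1/2):ℝ)| * Real.exp (-t*x) ≤ Bfun t * 1 :=
          mul_le_mul (F_sub_bound ht0) he (Real.exp_pos _).le (Bfun_nonneg ht0)
      _ = Bfun t := mul_one _
  have hg_int : IntegrableOn g (Ioi (0:ℝ)) := by
    apply Bfun_int.mono' hgmeas
    filter_upwards [ae_restrict_mem measurableSet_Ioi] with t ht using hgbound t ht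
  have hsum : (∫ t in Ioi (0:ℝ),
        t ^ 2 * (1 + t ^ 2) ^ (-(5 / 4 : ℝ)) * Real.exp (Lfun t / Real.pi) * Real.exp (-t * x))
      = (∫ t in Ioi (0:ℝ), t ^ (-(1/2):ℝ) * Real.exp (-t*x)) + ∫ t in Ioi (0:ℝ), g t := by
    rw [← integral_add (u_int hx) hg_int]
    apply setIntegral_congr_fun measurableSet_Ioi
    intro t ht
    show t ^ 2 * (1 + t ^ 2) ^ (-(5 / 4 : ℝ)) * Real.exp (Lfun t / Real.pi) * Real.exp (-t * x)
      = t ^ (-(1/2):ℝ) * Real.exp (-t*x) + (Ffun t - t ^ (-(1/2):ℝ)) * Real.exp (-t*x)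
    rw [Ffun]; ring
  have key : rDeriv x + (2 * Real.pi) ^ (-(1 / 2 : ℝ)) * x ^ (-(1 / 2 : ℝ))
      = -(Real.sqrt 2 / (2 * Real.pi)) * ∫ t in Ioi (0:ℝ), g t := by
    rw [rDeriv, hsum, u_val hx, ← const_id]; ring
  rw [key, abs_mul, abs_neg, abs_of_pos hcoef]
  have habs : |∫ t in Ioi (0:ℝ), g t| ≤ ∫ t in Ioi (0:ℝ), Bfun t := by
    have h1 : |∫ t in Ioi (0:ℝ), g t| ≤ ∫ t in Ioi (0:ℝ), |g t| := by
      simpa using norm_integral_le_integral_norm (μ := volume.restrict (Ioi (0:ℝ))) g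
    have h2 : ∫ t in Ioi (0:ℝ), |g t| ≤ ∫ t in Ioi (0:ℝ), Bfun t := by
      apply setIntegral_mono_on hg_int.abs Bfun_int measurableSet_Ioi
      intro t ht
      simpa [Real.norm_eq_abs] using hgbound t ht
    linarith
  nlinarith
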